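/- On a spatially flat FRW spacetime the scalar curvature satisfies R = −6(Ḣ + 2H²) with H = ȧ/a. The scale factors a(t) = β₂ e^{± m t/√2}, a(t) = β₂ √(cosh(±√2 m t + β₁)), and a(t) = β₂ √(sinh(±√2 m t + β₁)) (on intervals where the argument of sinh is positive) all have constant scalar curvature R = −6m² for m > 0, and for m = 0 the scale factors a(t) = β₂√(±t + β₁) and a(t) = β₂ have R = 0. -/

import Mathlib

/-- The scalar curvature of a spatially flat FRW spacetime with scale factor `a`:
`R = -6 (Ḣ + 2H²)` with `H = ȧ/a`. -/
noncomputable def scalarCurv (a : ℝ → ℝ) (t : ℝ) : ℝ :=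
  -6 * (deriv (fun s => deriv a s / a s) t + 2 * (deriv a t / a t) ^ 2)

/-- If the Hubble function `ȧ/a` agrees with `H` near `t` and `H` has derivative `H'` at `t`,
then the scalar curvature at `t` is `-6 (H' + 2 H t ^ 2)`. -/
lemma scalarCurv_eq (a H : ℝ → ℝ) (t H' : ℝ)
    (hH : (fun u => deriv a u / a u) =ᶠ[nhds t] H)
    (hd : HasDerivAt H H' t) :
    scalarCurv a t = -6 * (H' + 2 * (H t) ^ 2) := by
  unfold scalarCurv
  rw [hH.deriv_eq, hd.deriv, hH.eq_of_nhds]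

/-- the scale factors `β₂ e^{± m t/√2}`, `β₂ √cosh(±√2 m t + β₁)` and
`β₂ √sinh(±√2 m t + β₁)` (where `sinh > 0`) have constant scalar curvature `R = -6m²`,
while `β₂ √(±t + β₁)` (where `±t + β₁ > 0`) and the constant scale factor `β₂` have `R = 0`. -/
theorem stmt_13 (m β₁ β₂ : ℝ) (hm : 0 < m) (hβ₂ : 0 < β₂) (s : ℝ) (hs : s = 1 ∨ s = -1) :
    (∀ t, scalarCurv (fun u => β₂ * Real.exp (s * m * u / Real.sqrt 2)) t = -6 * m ^ 2) ∧
    (∀ t, scalarCurv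
        (fun u => β₂ * Real.sqrt (Real.cosh (s * Real.sqrt 2 * m * u + β₁))) t = -6 * m ^ 2) ∧
    (∀ t, 0 < Real.sinh (s * Real.sqrt 2 * m * t + β₁) →
      scalarCurv
        (fun u => β₂ * Real.sqrt (Real.sinh (s * Real.sqrt 2 * m * u + β₁))) t = -6 * m ^ 2) ∧
    (∀ t, 0 < s * t + β₁ →
      scalarCurv (fun u => β₂ * Real.sqrt (s * u + β₁)) t = 0) ∧
    (∀ t, scalarCurv (fun _ => β₂) t = 0) := by
  have hs2 : s * s = 1 := by rcases hs with h | h <;> rw [h] <;> norm_num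
  have h2 : Real.sqrt 2 ≠ 0 := by positivity
  have hb : β₂ ≠ 0 := hβ₂.ne'
  have hsq2 : Real.sqrt 2 * Real.sqrt 2 = 2 := Real.mul_self_sqrt (by norm_num)
  set k : ℝ := s * Real.sqrt 2 * m with hk
  have hk2 : k * k = 2 * m ^ 2 := by
    rw [hk, show s * Real.sqrt 2 * m * (s * Real.sqrt 2 * m)
      = s * s * (Real.sqrt 2 * Real.sqrt 2) * m ^ 2 by ring, hs2, hsq2]; ring
  have hX : ∀ u : ℝ, HasDerivAt (fun u : ℝ => k * u + β₁) k u := fun u => by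
    simpa using ((hasDerivAt_id u).const_mul k).add_const β₁
  refine ⟨?_, ?_, ?_, ?_, ?_⟩
  · -- exponential case
    intro t
    have hd : ∀ u : ℝ, HasDerivAt (fun u => β₂ * Real.exp (s * m * u / Real.sqrt 2))
        (β₂ * (Real.exp (s * m * u / Real.sqrt 2) * (s * m * 1 / Real.sqrt 2))) u := fun u =>
      ((((hasDerivAt_id u).const_mul (s * m)).div_const (Real.sqrt 2)).exp).const_mul β₂
    have hH : (fun u => deriv (fun u => β₂ * Real.exp (s * m * u / Real.sqrt 2)) u /
        (fun u => β₂ * Real.exp (s * m * u / Real.sqrt 2)) u) =ᶠ[nhds t]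
        (fun _ => s * m / Real.sqrt 2) := by
      apply Filter.Eventually.of_forall
      intro u
      beta_reduce
      rw [(hd u).deriv]
      field_simp
    rw [scalarCurv_eq _ _ t 0 hH (hasDerivAt_const t _)]
    field_simp
    nlinarith [hsq2, hs2]
  · -- cosh case
    intro t
    have hcpos : ∀ u : ℝ, 0 < Real.cosh (k * u + β₁) := fun u => Real.cosh_pos _
    have hd : ∀ u : ℝ, HasDerivAt (fun u => β₂ * Real.sqrt (Real.cosh (k * u + β₁)))
        (β₂ * (Real.sinh (k * u + β₁) * k / (2 * Real.sqrt (Real.cosh (k * u + β₁))))) u :=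
      fun u => (((hX u).cosh).sqrt (hcpos u).ne').const_mul β₂
    have hH : (fun u => deriv (fun u => β₂ * Real.sqrt (Real.cosh (k * u + β₁))) u /
        (fun u => β₂ * Real.sqrt (Real.cosh (k * u + β₁))) u) =ᶠ[nhds t]
        (fun u => k * Real.sinh (k * u + β₁) / (2 * Real.cosh (k * u + β₁))) := by
      apply Filter.Eventually.of_forall
      intro u
      beta_reduce
      rw [(hd u).deriv]
      have hsne : Real.sqrt (Real.cosh (k * u + β₁)) ≠ 0 := by positivity
      have hms' : Real.sqrt (Real.cosh (k * u + β₁)) ^ 2 = Real.cosh (k * u + β₁) :=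
        Real.sq_sqrt (hcpos u).le
      field_simp
      linear_combination (-1) * k * Real.sinh (k * u + β₁) * hms'
    have hdH : HasDerivAt (fun u => k * Real.sinh (k * u + β₁) / (2 * Real.cosh (k * u + β₁)))
        ((k * (Real.cosh (k * t + β₁) * k) * (2 * Real.cosh (k * t + β₁)) -
          k * Real.sinh (k * t + β₁) * (2 * (Real.sinh (k * t + β₁) * k))) /
          (2 * Real.cosh (k * t + β₁)) ^ 2) t :=
      (((hX t).sinh).const_mul k).div (((hX t).cosh).const_mul 2) (by positivity)
    rw [scalarCurv_eq _ _ t _ hH hdH]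
    have hid : Real.cosh (k * t + β₁) ^ 2 - Real.sinh (k * t + β₁) ^ 2 = 1 :=
      Real.cosh_sq_sub_sinh_sq _
    field_simp
    nlinarith [hid, hk2, sq_nonneg (Real.cosh (k * t + β₁)), hcpos t]
  · -- sinh case
    intro t ht
    have hev : ∀ᶠ u in nhds t, 0 < Real.sinh (k * u + β₁) := by
      have hc : ContinuousAt (fun u : ℝ => Real.sinh (k * u + β₁)) t :=
        (Real.continuous_sinh.comp (by continuity)).continuousAt
      exact hc.eventually (eventually_gt_nhds ht)
    have hH : (fun u => deriv (fun u => β₂ * Real.sqrt (Real.sinh (k * u + β₁))) u /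
        (fun u => β₂ * Real.sqrt (Real.sinh (k * u + β₁))) u) =ᶠ[nhds t]
        (fun u => k * Real.cosh (k * u + β₁) / (2 * Real.sinh (k * u + β₁))) := by
      filter_upwards [hev] with u hu
      beta_reduce
      have hd : HasDerivAt (fun u => β₂ * Real.sqrt (Real.sinh (k * u + β₁)))
          (β₂ * (Real.cosh (k * u + β₁) * k / (2 * Real.sqrt (Real.sinh (k * u + β₁))))) u :=
        (((hX u).sinh).sqrt hu.ne').const_mul β₂
      rw [hd.deriv]
      have hsne : Real.sqrt (Real.sinh (k * u + β₁)) ≠ 0 := by positivity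
      have hms' : Real.sqrt (Real.sinh (k * u + β₁)) ^ 2 = Real.sinh (k * u + β₁) :=
        Real.sq_sqrt hu.le
      field_simp
      linear_combination (-1) * k * hms'
    have hdH : HasDerivAt (fun u => k * Real.cosh (k * u + β₁) / (2 * Real.sinh (k * u + β₁)))
        ((k * (Real.sinh (k * t + β₁) * k) * (2 * Real.sinh (k * t + β₁)) -
          k * Real.cosh (k * t + β₁) * (2 * (Real.cosh (k * t + β₁) * k))) /
          (2 * Real.sinh (k * t + β₁)) ^ 2) t :=
      (((hX t).cosh).const_mul k).div (((hX t).sinh).const_mul 2) (by positivity)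
    rw [scalarCurv_eq _ _ t _ hH hdH]
    have hid : Real.cosh (k * t + β₁) ^ 2 - Real.sinh (k * t + β₁) ^ 2 = 1 :=
      Real.cosh_sq_sub_sinh_sq _
    field_simp
    nlinarith [hid, hk2, sq_nonneg (Real.sinh (k * t + β₁)), ht]
  · -- square root case
    intro t ht
    have hlin : ∀ u : ℝ, HasDerivAt (fun u : ℝ => s * u + β₁) s u := fun u => by
      simpa using ((hasDerivAt_id u).const_mul s).add_const β₁
    have hev : ∀ᶠ u in nhds t, 0 < s * u + β₁ := by
      have hc : ContinuousAt (fun u : ℝ => s * u + β₁) t := by fun_prop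
      exact hc.eventually (eventually_gt_nhds ht)
    have hH : (fun u => deriv (fun u => β₂ * Real.sqrt (s * u + β₁)) u /
        (fun u => β₂ * Real.sqrt (s * u + β₁)) u) =ᶠ[nhds t]
        (fun u => s / (2 * (s * u + β₁))) := by
      filter_upwards [hev] with u hu
      beta_reduce
      have hd : HasDerivAt (fun u => β₂ * Real.sqrt (s * u + β₁))
          (β₂ * (s / (2 * Real.sqrt (s * u + β₁)))) u :=
        ((hlin u).sqrt hu.ne').const_mul β₂
      rw [hd.deriv]
      have hsne : Real.sqrt (s * u + β₁) ≠ 0 := by positivity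
      have hms' : Real.sqrt (s * u + β₁) ^ 2 = s * u + β₁ := Real.sq_sqrt hu.le
      field_simp
      linear_combination (-1) * s * hms'
    have hdH : HasDerivAt (fun u => s / (2 * (s * u + β₁)))
        ((0 * (2 * (s * t + β₁)) - s * (2 * s)) / (2 * (s * t + β₁)) ^ 2) t :=
      (hasDerivAt_const t s).div ((hlin t).const_mul 2) (by positivity)
    rw [scalarCurv_eq _ _ t _ hH hdH]
    field_simp
    ring
  · -- constant case
    intro t
    have hH : (fun u => deriv (fun _ : ℝ => β₂) u / (fun _ : ℝ => β₂) u) =ᶠ[nhds t]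
        (fun _ => (0 : ℝ)) := by
      apply Filter.Eventually.of_forall
      intro u
      simp
    rw [scalarCurv_eq _ _ t 0 hH (hasDerivAt_const t _)]
    norm_num
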